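/- (k-way submodularity) Let α be a type, let ξ : Finset α → ℝ be submodular, and let V_1, …, V_l be finite subsets of α. Then ξ(V_1) + ⋯ + ξ(V_l) ≥ ξ(Ṽ_1) + ⋯ + ξ(Ṽ_l). -/

import Mathlib

/-- For a family of finite sets `V 0, …, V (l-1)` of `α`, the derived set
`Ṽ_k = ⋃_{ {i₁,…,i_k} ⊆ {1,…,l} } V_{i₁} ∩ ⋯ ∩ V_{i_k}`, the union ranging over all
`k`-element index subsets. -/
def tildeSet {α : Type*} [DecidableEq α] {l : ℕ} (V : Fin l → Finset α) (k : ℕ) : Finset α :=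
  ((Finset.univ : Finset (Fin l)).powersetCard k).sup fun s =>
    if h : s.Nonempty then s.inf' h V else ∅

lemma mem_tildeSet {α : Type*} [DecidableEq α] {l k : ℕ} (V : Fin l → Finset α)
    (hk : 1 ≤ k) (x : α) :
    x ∈ tildeSet V k ↔ k ≤ (Finset.univ.filter fun i => x ∈ V i).card := by
  classical
  unfold tildeSet
  rw [Finset.mem_sup]
  constructor
  · rintro ⟨s, hs, hx⟩
    rw [Finset.mem_powersetCard] at hs
    have hne : s.Nonempty := Finset.card_pos.mp (hs.2 ▸ hk)
    rw [dif_pos hne, Finset.mem_inf'] at hx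
    calc k = s.card := hs.2.symm
      _ ≤ _ := Finset.card_le_card fun i hi =>
          Finset.mem_filter.mpr ⟨Finset.mem_univ i, hx i hi⟩
  · intro h
    obtain ⟨s, hsub, hcard⟩ := Finset.exists_subset_card_eq h
    have hne : s.Nonempty := Finset.card_pos.mp (hcard ▸ hk)
    refine ⟨s, Finset.mem_powersetCard.mpr ⟨Finset.subset_univ s, hcard⟩, ?_⟩
    rw [dif_pos hne, Finset.mem_inf']
    exact fun i hi => (Finset.mem_filter.mp (hsub hi)).2

lemma card_filter_snoc {α : Type*} [DecidableEq α] {l : ℕ} (V : Fin l → Finset α)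
    (v : Finset α) (x : α) :
    (Finset.univ.filter fun i => x ∈ (Fin.snoc V v : Fin (l + 1) → Finset α) i).card
      = (Finset.univ.filter fun i => x ∈ V i).card + (if x ∈ v then 1 else 0) := by
  classical
  rw [Finset.card_filter, Finset.card_filter, Fin.sum_univ_castSucc]
  simp [Fin.snoc_castSucc, Fin.snoc_last]

/-- auxiliary: `g 0 = v`, `g j = v ∩ Ṽ_j` for `j ≥ 1`. -/
def gSet {α : Type*} [DecidableEq α] {l : ℕ} (V : Fin l → Finset α) (v : Finset α)
    (j : ℕ) : Finset α :=
  if j = 0 then v else v ∩ tildeSet V j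

lemma card_le_l {α : Type*} [DecidableEq α] {l : ℕ} (V : Fin l → Finset α) (x : α) :
    (Finset.univ.filter fun i => x ∈ V i).card ≤ l := by
  simpa using Finset.card_filter_le (Finset.univ : Finset (Fin l)) _

lemma tildeSet_snoc {α : Type*} [DecidableEq α] {l : ℕ} (V : Fin l → Finset α)
    (v : Finset α) (j : ℕ) :
    tildeSet (Fin.snoc V v) (j + 1) = tildeSet V (j + 1) ∪ gSet V v j := by
  classical
  ext x
  rw [mem_tildeSet _ (Nat.succ_le_succ (Nat.zero_le j)) x, card_filter_snoc,
    Finset.mem_union, mem_tildeSet V (Nat.succ_le_succ (Nat.zero_le j)) x]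
  cases j with
  | zero =>
      rw [gSet, if_pos rfl]
      by_cases hv : x ∈ v <;> simp [hv] <;> omega
  | succ j =>
      rw [gSet, if_neg (Nat.succ_ne_zero j), Finset.mem_inter,
        mem_tildeSet V (Nat.succ_le_succ (Nat.zero_le j)) x]
      by_cases hv : x ∈ v <;> simp [hv] <;> omega

lemma tildeSet_inter_gSet {α : Type*} [DecidableEq α] {l : ℕ} (V : Fin l → Finset α)
    (v : Finset α) (j : ℕ) :
    tildeSet V (j + 1) ∩ gSet V v j = gSet V v (j + 1) := by
  classical
  ext x
  rw [Finset.mem_inter, mem_tildeSet V (Nat.succ_le_succ (Nat.zero_le j)) x,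
    gSet, gSet, if_neg (Nat.succ_ne_zero j), Finset.mem_inter,
    mem_tildeSet V (Nat.succ_le_succ (Nat.zero_le j)) x]
  cases j with
  | zero => rw [if_pos rfl]; tauto
  | succ j =>
      rw [if_neg (Nat.succ_ne_zero j), Finset.mem_inter,
        mem_tildeSet V (Nat.succ_le_succ (Nat.zero_le j)) x]
      constructor
      · rintro ⟨h1, h2, h3⟩; exact ⟨h2, h1⟩
      · rintro ⟨h1, h2⟩; exact ⟨h2, h1, by omega⟩

lemma tildeSet_top {α : Type*} [DecidableEq α] {l : ℕ} (V : Fin l → Finset α) :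
    tildeSet V (l + 1) = ∅ := by
  classical
  ext x
  rw [mem_tildeSet _ (by omega) x]
  have := card_le_l V x
  simp; omega

lemma sum_Icc_one (n : ℕ) (f : ℕ → ℝ) :
    ∑ k ∈ Finset.Icc 1 n, f k = ∑ j ∈ Finset.range n, f (j + 1) := by
  induction n with
  | zero => simp
  | succ n ih =>
      rw [Finset.sum_range_succ, ← ih, show Finset.Icc 1 (n + 1)
        = insert (n + 1) (Finset.Icc 1 n) by ext m; simp [Finset.mem_Icc]; omega,
        Finset.sum_insert (by simp)]
      ring

/-- k-way submodularity: if `ξ` is submodular then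
`ξ(V_1) + ⋯ + ξ(V_l) ≥ ξ(Ṽ_1) + ⋯ + ξ(Ṽ_l)`. -/
theorem k_way_submodularity {α : Type*} [DecidableEq α]
    (ξ : Finset α → ℝ)
    (hsub : ∀ A B : Finset α, ξ (A ∪ B) + ξ (A ∩ B) ≤ ξ A + ξ B)
    {l : ℕ} (V : Fin l → Finset α) :
    ∑ k ∈ Finset.Icc 1 l, ξ (tildeSet V k) ≤ ∑ i : Fin l, ξ (V i) := by
  classical
  induction l with
  | zero => simp
  | succ l ih =>
      set W : Fin l → Finset α := Fin.init V with hW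
      set v : Finset α := V (Fin.last l) with hv
      have hVsnoc : V = Fin.snoc W v := (Fin.snoc_init_self V).symm
      have key : ∀ j ∈ Finset.range (l + 1),
          ξ (tildeSet V (j + 1)) + ξ (gSet W v (j + 1))
            ≤ ξ (tildeSet W (j + 1)) + ξ (gSet W v j) := by
        intro j _
        have := hsub (tildeSet W (j + 1)) (gSet W v j)
        rwa [tildeSet_inter_gSet, ← tildeSet_snoc, ← hVsnoc] at this
      have hsum := Finset.sum_le_sum key
      rw [Finset.sum_add_distrib, Finset.sum_add_distrib] at hsum
      have h1 : ∑ j ∈ Finset.range (l + 1), ξ (gSet W v (j + 1))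
          = ∑ j ∈ Finset.range l, ξ (gSet W v (j + 1)) + ξ (gSet W v (l + 1)) :=
        Finset.sum_range_succ _ l
      have h2 : ∑ j ∈ Finset.range (l + 1), ξ (gSet W v j)
          = ∑ j ∈ Finset.range l, ξ (gSet W v (j + 1)) + ξ (gSet W v 0) :=
        Finset.sum_range_succ' _ l
      have h3 : ∑ j ∈ Finset.range (l + 1), ξ (tildeSet W (j + 1))
          = ∑ j ∈ Finset.range l, ξ (tildeSet W (j + 1)) + ξ (tildeSet W (l + 1)) :=
        Finset.sum_range_succ _ l
      have h4 : ξ (gSet W v (l + 1)) = ξ (tildeSet W (l + 1)) := by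
        rw [gSet, if_neg (by omega), tildeSet_top]; simp
      have h5 : ξ (gSet W v 0) = ξ v := by rw [gSet, if_pos rfl]
      have hIH := ih W
      rw [sum_Icc_one] at hIH ⊢
      have hRHS : ∑ i : Fin (l + 1), ξ (V i) = ∑ i : Fin l, ξ (W i) + ξ v := by
        rw [Fin.sum_univ_castSucc]; rfl
      rw [hRHS]
      linarith
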